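/- Let (V_1,...,V_n) be an n-tuple of doubly non-commuting isometries on a complex Hilbert space H. (1) Let A, B ⊆ {1,...,n} with A ≠ B, and let L_A, L_B be closed subspaces of H reducing all V_1,...,V_n such that V_i restricted to L_A is a pure isometry for i ∈ A and unitary for i ∈ A^c, while V_i restricted to L_B is a pure isometry for i ∈ B and unitary for i ∈ B^c. Then L_A ⊥ L_B. (2) Suppose that for each A ⊆ {1,...,n}, L_A is a closed subspace reducing all V_1,...,V_n such that V_i restricted to L_A is a pure isometry for i ∈ A and unitary for i ∈ A^c, and suppose H = ⊕_{A ⊆ {1,...,n}} L_A (algebraically). Then L_A = H_A for every A. -/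

import Mathlib

open ContinuousLinearMap

variable {H : Type*} [NormedAddCommGroup H] [InnerProductSpace ℂ H] [CompleteSpace H]

/-- The purely isometric part `H^iso`: the closed linear span of the subspaces
`S^k (ker S*)`, `k ≥ 0`. -/
noncomputable def Hiso (S : H →L[ℂ] H) : Submodule ℂ H :=
  (⨆ k : ℕ, Submodule.map ((S ^ k : H →L[ℂ] H) : H →ₗ[ℂ] H) (LinearMap.ker ((adjoint S : H →L[ℂ] H) : H →ₗ[ℂ] H))).topologicalClosure

/-- The unitary part `H^uni := ⋂_{k≥0} S^k (H)`. -/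
noncomputable def Huni (S : H →L[ℂ] H) : Submodule ℂ H :=
  ⨅ k : ℕ, LinearMap.range ((S ^ k : H →L[ℂ] H) : H →ₗ[ℂ] H)

/-- A closed subspace `L` reduces `S` if it is invariant under `S` and `S*`. -/
def Reduces (S : H →L[ℂ] H) (L : Submodule ℂ H) : Prop :=
  (∀ x ∈ L, S x ∈ L) ∧ ∀ x ∈ L, adjoint S x ∈ L

/-- `S` is unitary on `L`: `S` maps `L` onto `L`. -/
def UnitaryOn (S : H →L[ℂ] H) (L : Submodule ℂ H) : Prop :=
  Submodule.map (S : H →ₗ[ℂ] H) L = L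

/-- `S` is a pure isometry on the `S`-invariant subspace `L`: `{0}` is the only
`S`-invariant closed subspace of `L` on which `S` is unitary. -/
def PureOn (S : H →L[ℂ] H) (L : Submodule ℂ H) : Prop :=
  ∀ M : Submodule ℂ H, IsClosed (M : Set H) → M ≤ L → Submodule.map (S : H →ₗ[ℂ] H) M = M → M = ⊥

/-- `P` is the orthogonal projection of `H` onto the subspace `K`. -/
def IsOrthoProj (P : H →L[ℂ] H) (K : Submodule ℂ H) : Prop :=
  ∀ x, P x ∈ K ∧ x - P x ∈ Kᗮ

/-- `(V 1, ..., V n)` is an `n`-tuple of doubly non-commuting isometries with structure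
constants `z i j`: each `V i` is an isometry (`(V i)* (V i) = 1`) and
`(V i)* (V j) = conj (z i j) • (V j) (V i)*` for all `i ≠ j`. -/
def DoublyNonCommuting {n : ℕ} (z : Fin n → Fin n → ℂ) (V : Fin n → H →L[ℂ] H) : Prop :=
  (∀ i, adjoint (V i) * V i = 1) ∧
    ∀ i j, i ≠ j →
      adjoint (V i) * V j = (starRingEnd ℂ) (z i j) • (V j * adjoint (V i))

/-- The space `H_A = ⋂_{i ∈ A} H_i^iso ∩ ⋂_{i ∈ Aᶜ} H_i^uni` (the range of the
projection `P_A`). -/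
noncomputable def HA {n : ℕ} (V : Fin n → H →L[ℂ] H) (A : Finset (Fin n)) : Submodule ℂ H :=
  (⨅ i ∈ A, Hiso (V i)) ⊓ ⨅ i ∈ Aᶜ, Huni (V i)

local notation "⟪" x ", " y "⟫" => @inner ℂ _ _ x y

section basic
variable {S : H →L[ℂ] H} (hS : adjoint S * S = 1)

lemma adjoint_pow' (k : ℕ) : adjoint (S ^ k) = (adjoint S) ^ k := by
  rw [← star_eq_adjoint, ← star_eq_adjoint, star_pow]

include hS

lemma pow_adjoint_mul_pow (k : ℕ) : (adjoint S) ^ k * S ^ k = 1 := by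
  induction k with
  | zero => simp
  | succ k ih =>
    rw [pow_succ, pow_succ']
    calc (adjoint S) ^ k * adjoint S * (S * S ^ k)
        = (adjoint S) ^ k * ((adjoint S * S) * S ^ k) := by rw [mul_assoc, mul_assoc]
      _ = 1 := by rw [hS, one_mul, ih]

lemma inner_pow_pow (k : ℕ) (u v : H) : ⟪(S ^ k) u, (S ^ k) v⟫ = ⟪u, v⟫ := by
  have : ⟪(S ^ k) u, (S ^ k) v⟫ = ⟪(adjoint (S ^ k)) ((S ^ k) u), v⟫ := by
    rw [adjoint_inner_left]
  rw [this, adjoint_pow', ← ContinuousLinearMap.mul_apply, pow_adjoint_mul_pow hS, ContinuousLinearMap.one_apply]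

lemma norm_pow_apply (k : ℕ) (u : H) : ‖(S ^ k) u‖ = ‖u‖ := by
  have h := inner_pow_pow hS k u u
  have h1 : (‖(S ^ k) u‖ : ℝ) ^ 2 = ‖u‖ ^ 2 := by
    rw [inner_self_eq_norm_sq_to_K, inner_self_eq_norm_sq_to_K] at h
    exact_mod_cast h
  nlinarith [norm_nonneg ((S ^ k) u), norm_nonneg u]

lemma norm_apply (u : H) : ‖S u‖ = ‖u‖ := by
  simpa using norm_pow_apply hS 1 u

lemma isometry_pow (k : ℕ) : Isometry (S ^ k : H →L[ℂ] H) :=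
  AddMonoidHomClass.isometry_of_norm _ (norm_pow_apply hS k)

lemma norm_adjoint_pow_le (k : ℕ) (u : H) : ‖((adjoint S) ^ k) u‖ ≤ ‖u‖ := by
  induction k with
  | zero => simp
  | succ k ih =>
    rw [pow_succ', ContinuousLinearMap.mul_apply]
    calc ‖(adjoint S) (((adjoint S) ^ k) u)‖ ≤ ‖adjoint S‖ * ‖((adjoint S) ^ k) u‖ :=
          le_opNorm _ _
      _ ≤ 1 * ‖u‖ := by
          apply mul_le_mul _ ih (norm_nonneg _) zero_le_one
          rw [LinearIsometryEquiv.norm_map]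
          exact opNorm_le_bound _ zero_le_one (fun x => by rw [norm_apply hS, one_mul])
      _ = ‖u‖ := one_mul _

end basic

section key
variable {S : H →L[ℂ] H} (hS : adjoint S * S = 1)

lemma reduces_adjoint_pow {L : Submodule ℂ H} (hL : Reduces S L) (k : ℕ) {x : H}
    (hx : x ∈ L) : ((adjoint S) ^ k) x ∈ L := by
  induction k with
  | zero => simpa using hx
  | succ k ih =>
    rw [pow_succ', ContinuousLinearMap.mul_apply]
    exact hL.2 _ ih

lemma mem_mapPow {L : Submodule ℂ H} (hL : ∀ x ∈ L, S x ∈ L) (k : ℕ) {x : H} (hx : x ∈ L) :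
    (S ^ k) x ∈ L := by
  induction k with
  | zero => simpa using hx
  | succ k ih =>
    rw [pow_succ', ContinuousLinearMap.mul_apply]
    exact hL _ ih

lemma mapPow_antitone {L : Submodule ℂ H} (hL : ∀ x ∈ L, S x ∈ L) {j k : ℕ} (hjk : j ≤ k) :
    Submodule.map ((S ^ k : H →L[ℂ] H) : H →ₗ[ℂ] H) L ≤ Submodule.map ((S ^ j : H →L[ℂ] H) : H →ₗ[ℂ] H) L := by
  obtain ⟨m, rfl⟩ := Nat.exists_eq_add_of_le hjk
  rintro x ⟨u, hu, rfl⟩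
  exact ⟨(S ^ m) u, mem_mapPow hL m hu, by simp only [ContinuousLinearMap.coe_coe]; rw [← ContinuousLinearMap.mul_apply, ← pow_add]⟩

include hS

lemma pure_iInf_eq_bot {L : Submodule ℂ H} (hLc : IsClosed (L : Set H)) (hL : Reduces S L)
    (hp : PureOn S L) : (⨅ j : ℕ, Submodule.map ((S ^ j : H →L[ℂ] H) : H →ₗ[ℂ] H) L) = ⊥ := by
  set M : Submodule ℂ H := ⨅ j : ℕ, Submodule.map ((S ^ j : H →L[ℂ] H) : H →ₗ[ℂ] H) L with hM
  have hMclosed : IsClosed (M : Set H) := by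
    rw [hM, Submodule.coe_iInf]
    exact isClosed_iInter fun j =>
      ((isometry_pow hS j).isClosedEmbedding.isClosedMap _ hLc)
  have hML : M ≤ L := by
    intro u hu
    have := Submodule.mem_iInf (fun j => Submodule.map ((S ^ j : H →L[ℂ] H) : H →ₗ[ℂ] H) L) |>.mp hu 0
    simpa using this
  refine hp M hMclosed hML (le_antisymm ?_ ?_)
  · rintro u ⟨v, hv, rfl⟩
    rw [Submodule.mem_iInf]
    intro j
    obtain ⟨t, ht, rfl⟩ := Submodule.mem_iInf _ |>.mp hv j
    refine ⟨S t, hL.1 _ ht, ?_⟩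
    simp only [ContinuousLinearMap.coe_coe]
    rw [← ContinuousLinearMap.mul_apply, ← ContinuousLinearMap.mul_apply, ← pow_succ, ← pow_succ']
  · intro u hu
    obtain ⟨v, hv, hvu⟩ := Submodule.mem_iInf _ |>.mp hu 1
    refine ⟨v, ?_, by simpa using hvu⟩
    have hinj : Function.Injective S := by
      intro a b hab
      have h0 : ‖a - b‖ = 0 := by rw [← norm_apply hS (a - b), map_sub, hab, sub_self, norm_zero]
      exact sub_eq_zero.mp (norm_eq_zero.mp h0)
    show v ∈ M
    rw [hM, Submodule.mem_iInf]
    intro j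
    obtain ⟨t, ht, htu⟩ := Submodule.mem_iInf _ |>.mp hu (j + 1)
    refine ⟨t, ht, hinj ?_⟩
    simp only [ContinuousLinearMap.coe_coe] at htu hvu ⊢
    have h1 : S ((S ^ j) t) = u := by
      rw [← ContinuousLinearMap.mul_apply, ← pow_succ', htu]
    rw [h1, ← hvu]
    simp

lemma pure_tendsto {L : Submodule ℂ H} (hLc : IsClosed (L : Set H)) (hL : Reduces S L)
    (hp : PureOn S L) {x : H} (hx : x ∈ L) :
    Filter.Tendsto (fun k => ‖((adjoint S) ^ k) x‖) Filter.atTop (nhds 0) := by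
  have hyx : ∀ k : ℕ, ⟪x, (S ^ k) (((adjoint S) ^ k) x)⟫ = (‖((adjoint S) ^ k) x‖ : ℂ) ^ 2 := by
    intro k
    rw [← adjoint_inner_left, adjoint_pow']
    exact_mod_cast inner_self_eq_norm_sq_to_K _
  have h1 : ∀ k l : ℕ, k ≤ l → ⟪(S ^ k) (((adjoint S) ^ k) x), (S ^ l) (((adjoint S) ^ l) x)⟫
      = (‖((adjoint S) ^ l) x‖ : ℂ) ^ 2 := by
    intro k l hkl
    obtain ⟨m, rfl⟩ := Nat.exists_eq_add_of_le hkl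
    have hyl : (S ^ (k + m)) (((adjoint S) ^ (k + m)) x)
        = (S ^ k) ((S ^ m) (((adjoint S) ^ (k + m)) x)) := by
      rw [pow_add, ContinuousLinearMap.mul_apply]
    rw [hyl, inner_pow_pow hS, ← adjoint_inner_left, adjoint_pow',
      ← ContinuousLinearMap.mul_apply, ← pow_add, add_comm m k]
    exact_mod_cast inner_self_eq_norm_sq_to_K _
  have hnormy : ∀ k : ℕ, ‖(S ^ k) (((adjoint S) ^ k) x)‖ = ‖((adjoint S) ^ k) x‖ :=
    fun k => norm_pow_apply hS k _
  have h2 : ∀ k l : ℕ, k ≤ l → ‖(S ^ k) (((adjoint S) ^ k) x) - (S ^ l) (((adjoint S) ^ l) x)‖ ^ 2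
      = ‖((adjoint S) ^ k) x‖ ^ 2 - ‖((adjoint S) ^ l) x‖ ^ 2 := by
    intro k l hkl
    rw [@norm_sub_sq ℂ, hnormy, hnormy, h1 k l hkl]
    have h5 : RCLike.re ((‖((adjoint S) ^ l) x‖ : ℂ) ^ 2) = ‖((adjoint S) ^ l) x‖ ^ 2 := by
      norm_cast
    rw [h5]; ring
  have h3 : Antitone (fun k => ‖((adjoint S) ^ k) x‖) := by
    refine antitone_nat_of_succ_le fun k => ?_
    have heq : ((adjoint S) ^ (k + 1)) x = ((adjoint S) ^ 1) (((adjoint S) ^ k) x) := by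
      rw [← ContinuousLinearMap.mul_apply, ← pow_add, add_comm]
    show ‖((adjoint S) ^ (k + 1)) x‖ ≤ ‖((adjoint S) ^ k) x‖
    rw [heq]
    simpa using norm_adjoint_pow_le hS 1 (((adjoint S) ^ k) x)
  have h3' : Antitone (fun k => ‖((adjoint S) ^ k) x‖ ^ 2) := fun k l hkl =>
    pow_le_pow_left₀ (norm_nonneg _) (h3 hkl) 2
  have h4 : CauchySeq (fun k => ‖((adjoint S) ^ k) x‖ ^ 2) :=
    (tendsto_atTop_ciInf h3' ⟨0, fun r ⟨k, hk⟩ => hk ▸ sq_nonneg _⟩).cauchySeq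
  have h5 : CauchySeq (fun k => (S ^ k) (((adjoint S) ^ k) x)) := by
    rw [Metric.cauchySeq_iff'] at h4 ⊢
    intro ε hε
    obtain ⟨N, hN⟩ := h4 (ε ^ 2) (by positivity)
    refine ⟨N, fun k hk => ?_⟩
    have hsq := h2 N k hk
    have hlt : ‖(S ^ N) (((adjoint S) ^ N) x) - (S ^ k) (((adjoint S) ^ k) x)‖ ^ 2 < ε ^ 2 := by
      have h6 := hN k hk
      rw [Real.dist_eq] at h6
      have h7 : ‖((adjoint S) ^ N) x‖ ^ 2 - ‖((adjoint S) ^ k) x‖ ^ 2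
          ≤ |‖((adjoint S) ^ k) x‖ ^ 2 - ‖((adjoint S) ^ N) x‖ ^ 2| := by
        rw [abs_sub_comm]; exact le_abs_self _
      linarith
    have := lt_of_pow_lt_pow_left₀ 2 (le_of_lt hε) hlt
    rwa [dist_eq_norm, norm_sub_rev]
  obtain ⟨w, hw⟩ := cauchySeq_tendsto_of_complete h5
  have hwM : w ∈ (⨅ j : ℕ, Submodule.map ((S ^ j : H →L[ℂ] H) : H →ₗ[ℂ] H) L) := by
    rw [Submodule.mem_iInf]
    intro j
    have hclosed : IsClosed ((Submodule.map ((S ^ j : H →L[ℂ] H) : H →ₗ[ℂ] H) L : Submodule ℂ H) : Set H) :=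
      (isometry_pow hS j).isClosedEmbedding.isClosedMap _ hLc
    refine hclosed.mem_of_tendsto hw ?_
    filter_upwards [Filter.eventually_ge_atTop j] with k hk
    exact mapPow_antitone hL.1 hk ⟨((adjoint S) ^ k) x, reduces_adjoint_pow hL k hx, rfl⟩
  rw [pure_iInf_eq_bot hS hLc hL hp, Submodule.mem_bot] at hwM
  subst hwM
  have h8 : Filter.Tendsto (fun k => ⟪x, (S ^ k) (((adjoint S) ^ k) x)⟫)
      Filter.atTop (nhds (0 : ℂ)) := by
    simpa using tendsto_const_nhds.inner hw
  have h9 : Filter.Tendsto (fun k => ‖((adjoint S) ^ k) x‖ ^ 2) Filter.atTop (nhds 0) := by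
    have hcomp := (Complex.continuous_re.tendsto 0).comp h8
    have heq : (fun k => ‖((adjoint S) ^ k) x‖ ^ 2)
        = Complex.re ∘ (fun k => ⟪x, (S ^ k) (((adjoint S) ^ k) x)⟫) := by
      funext k
      rw [Function.comp_apply, hyx k]
      norm_cast
    rw [heq]
    simpa using hcomp
  have h10 := (Real.continuous_sqrt.tendsto 0).comp h9
  have heq2 : (fun k => ‖((adjoint S) ^ k) x‖)
      = Real.sqrt ∘ (fun k => ‖((adjoint S) ^ k) x‖ ^ 2) := by
    funext k
    rw [Function.comp_apply, Real.sqrt_sq (norm_nonneg _)]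
  rw [heq2]
  simpa using h10

end key

section wold
variable {S : H →L[ℂ] H} (hS : adjoint S * S = 1)

lemma unitaryOn_le_huni {L : Submodule ℂ H} (h : UnitaryOn S L) : L ≤ Huni S := by
  have hpow : ∀ k : ℕ, Submodule.map ((S ^ k : H →L[ℂ] H) : H →ₗ[ℂ] H) L = L := by
    intro k
    induction k with
    | zero =>
        ext x
        simp [Submodule.mem_map, ContinuousLinearMap.one_apply]
    | succ k ih =>
      apply le_antisymm
      · rintro _ ⟨u, hu, rfl⟩
        have h1 : (S ^ (k + 1)) u = (S ^ k) (S u) := by rw [pow_succ]; rfl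
        rw [ContinuousLinearMap.coe_coe, h1]
        have hSu : S u ∈ L := h ▸ ⟨u, hu, rfl⟩
        exact ih ▸ ⟨S u, hSu, rfl⟩
      · intro x hx
        obtain ⟨u, hu, rfl⟩ := ih ▸ hx
        obtain ⟨v, hv, rfl⟩ := h ▸ hu
        exact ⟨v, hv, by rw [pow_succ]; rfl⟩
  intro x hx
  rw [Huni, Submodule.mem_iInf]
  intro k
  obtain ⟨u, _, rfl⟩ := (hpow k) ▸ hx
  exact ⟨u, rfl⟩

include hS

lemma pure_le_orthogonal_huni {L : Submodule ℂ H} (hLc : IsClosed (L : Set H))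
    (hL : Reduces S L) (hp : PureOn S L) : L ≤ (Huni S)ᗮ := by
  intro x hx
  rw [Submodule.mem_orthogonal]
  intro y hy
  have hbd : ∀ k : ℕ, ‖⟪y, x⟫‖ ≤ ‖y‖ * ‖((adjoint S) ^ k) x‖ := by
    intro k
    obtain ⟨w, hw⟩ := Submodule.mem_iInf _ |>.mp hy k
    have h1 : ⟪y, x⟫ = ⟪w, ((adjoint S) ^ k) x⟫ := by
      rw [← hw, ContinuousLinearMap.coe_coe, ← adjoint_pow', ← adjoint_inner_right]
    have h2 : ‖w‖ = ‖y‖ := by rw [← hw, ContinuousLinearMap.coe_coe, norm_pow_apply hS]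
    rw [h1, ← h2]
    exact norm_inner_le_norm _ _
  have hlim : Filter.Tendsto (fun k => ‖y‖ * ‖((adjoint S) ^ k) x‖) Filter.atTop (nhds 0) := by
    have := (tendsto_const_nhds (x := ‖y‖)).mul (pure_tendsto hS hLc hL hp hx)
    simpa using this
  have : ‖⟪y, x⟫‖ ≤ 0 := ge_of_tendsto' hlim hbd
  exact norm_le_zero_iff.mp this

lemma hiso_eq_orthogonal_huni : Hiso S = (Huni S)ᗮ := by
  have step1 : Hiso S ≤ (Huni S)ᗮ := by
    apply Submodule.topologicalClosure_minimal _ _ (Submodule.isClosed_orthogonal _)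
    apply iSup_le
    intro k
    rintro _ ⟨u, hu, rfl⟩
    rw [Submodule.mem_orthogonal]
    intro y hy
    obtain ⟨w, hw⟩ := Submodule.mem_iInf _ |>.mp hy (k + 1)
    have h1 : y = (S ^ k) (S w) := by rw [← hw, pow_succ]; rfl
    rw [h1, ContinuousLinearMap.coe_coe, inner_pow_pow hS, ← adjoint_inner_right,
      show adjoint S u = 0 from LinearMap.mem_ker.mp hu, inner_zero_right]
  have step2 : (Hiso S)ᗮ ≤ Huni S := by
    intro x hx
    rw [Submodule.mem_orthogonal] at hx
    have horth : ∀ (k : ℕ) (u : H), adjoint S u = 0 → ⟪(S ^ k) u, x⟫ = 0 := by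
      intro k u hu
      apply hx
      apply Submodule.le_topologicalClosure
      exact le_iSup (fun k => Submodule.map ((S ^ k : H →L[ℂ] H) : H →ₗ[ℂ] H) (LinearMap.ker ((adjoint S : H →L[ℂ] H) : H →ₗ[ℂ] H))) k
        ⟨u, LinearMap.mem_ker.mpr hu, rfl⟩
    have hrec : ∀ k : ℕ, S (adjoint S (((adjoint S) ^ k) x)) = ((adjoint S) ^ k) x := by
      intro k
      set u := ((adjoint S) ^ k) x with hu
      set d := u - S (adjoint S u) with hd
      have hdker : adjoint S d = 0 := by
        rw [hd, map_sub, ← ContinuousLinearMap.mul_apply (adjoint S) S, hS, ContinuousLinearMap.one_apply, sub_self]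
      have hd1 : ⟪d, u⟫ = 0 := by
        have h := horth k d hdker
        rw [← adjoint_inner_right, adjoint_pow'] at h
        rw [hu]
        exact h
      have hd2 : ⟪d, S (adjoint S u)⟫ = 0 := by
        rw [← adjoint_inner_left, hdker, inner_zero_left]
      have : ⟪d, d⟫ = 0 := by rw [hd, inner_sub_right, hd1, hd2, sub_zero]
      have hd0 : d = 0 := inner_self_eq_zero.mp this
      rw [hd] at hd0
      exact (sub_eq_zero.mp hd0).symm
    have hpow : ∀ k : ℕ, (S ^ k) (((adjoint S) ^ k) x) = x := by
      intro k
      induction k with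
      | zero => simp
      | succ k ih =>
        have h1 : ((adjoint S) ^ (k + 1)) x = adjoint S (((adjoint S) ^ k) x) := by
          rw [pow_succ', ContinuousLinearMap.mul_apply]
        have h2 : (S ^ (k + 1)) (((adjoint S) ^ (k + 1)) x)
            = (S ^ k) (S (adjoint S (((adjoint S) ^ k) x))) := by
          rw [h1, pow_succ]; rfl
        rw [h2, hrec k, ih]
    rw [Huni, Submodule.mem_iInf]
    intro k
    exact ⟨((adjoint S) ^ k) x, hpow k⟩
  apply le_antisymm step1
  calc (Huni S)ᗮ ≤ (Hiso S)ᗮᗮ := Submodule.orthogonal_le step2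
    _ = (Hiso S).topologicalClosure := Submodule.orthogonal_orthogonal_eq_closure _
    _ = Hiso S := IsClosed.submodule_topologicalClosure_eq
        (Submodule.isClosed_topologicalClosure _)

lemma pure_le_hiso {L : Submodule ℂ H} (hLc : IsClosed (L : Set H))
    (hL : Reduces S L) (hp : PureOn S L) : L ≤ Hiso S := by
  rw [hiso_eq_orthogonal_huni hS]
  exact pure_le_orthogonal_huni hS hLc hL hp

end wold

lemma inner_zero_of_orth {K : Submodule ℂ H} {x y : H} (hx : x ∈ K) (hy : y ∈ Kᗮ) :
    ⟪x, y⟫ = 0 :=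
  Submodule.mem_orthogonal K y |>.mp hy x hx

theorem statement12 {n : ℕ} (hn : 1 ≤ n) (z : Fin n → Fin n → ℂ)
    (hz1 : ∀ i j, i ≠ j → ‖z i j‖ = 1)
    (hz2 : ∀ i j, i ≠ j → z j i = (starRingEnd ℂ) (z i j))
    (V : Fin n → H →L[ℂ] H) (hV : DoublyNonCommuting z V) :
    (∀ A B : Finset (Fin n), A ≠ B → ∀ LA LB : Submodule ℂ H,
        IsClosed (LA : Set H) → IsClosed (LB : Set H) →
        (∀ i, Reduces (V i) LA) → (∀ i, Reduces (V i) LB) →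
        (∀ i ∈ A, PureOn (V i) LA) → (∀ i ∉ A, UnitaryOn (V i) LA) →
        (∀ i ∈ B, PureOn (V i) LB) → (∀ i ∉ B, UnitaryOn (V i) LB) →
        LA ≤ LBᗮ) ∧
    (∀ L : Finset (Fin n) → Submodule ℂ H,
        (∀ A, IsClosed ((L A : Set H))) →
        (∀ A i, Reduces (V i) (L A)) →
        (∀ A, ∀ i ∈ A, PureOn (V i) (L A)) →
        (∀ A, ∀ i ∉ A, UnitaryOn (V i) (L A)) →
        iSupIndep L → (⨆ A, L A) = ⊤ →
        ∀ A, L A = HA V A) := by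
  have hiso : ∀ i, adjoint (V i) * V i = 1 := hV.1
  constructor
  · -- Part 1
    intro A B hAB LA LB hLAc hLBc hredA hredB hpureA huniA hpureB huniB
    by_cases h : ∃ i, i ∈ A ∧ i ∉ B
    · obtain ⟨i, hiA, hiB⟩ := h
      intro x hx
      rw [Submodule.mem_orthogonal]
      intro u hu
      exact inner_zero_of_orth (unitaryOn_le_huni (huniB i hiB) hu)
        (pure_le_orthogonal_huni (hiso i) hLAc (hredA i) (hpureA i hiA) hx)
    · push_neg at h
      have hsub : A ⊆ B := fun i hi => h i hi
      have h2 : ∃ i, i ∈ B ∧ i ∉ A := by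
        by_contra h2
        push_neg at h2
        exact hAB (Finset.Subset.antisymm hsub (fun i hi => h2 i hi))
      obtain ⟨i, hiB, hiA⟩ := h2
      intro x hx
      rw [Submodule.mem_orthogonal]
      intro u hu
      rw [← inner_conj_symm, inner_zero_of_orth (unitaryOn_le_huni (huniA i hiA) hx)
        (pure_le_orthogonal_huni (hiso i) hLBc (hredB i) (hpureB i hiB) hu), map_zero]
  · -- Part 2
    intro L hLc hred hpure huni _hindep hsup A
    have step_a : ∀ B, L B ≤ HA V B := by
      intro B
      refine le_inf (le_iInf fun i => le_iInf fun hi =>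
        pure_le_hiso (hiso i) (hLc B) (hred B i) (hpure B i hi)) ?_
      exact le_iInf fun i => le_iInf fun hi =>
        unitaryOn_le_huni (huni B i (Finset.mem_compl.mp hi))
    have step_b : ∀ B, B ≠ A → L B ≤ (HA V A)ᗮ := by
      intro B hBA
      have hHA_iso : ∀ i ∈ A, HA V A ≤ Hiso (V i) := fun i hi =>
        inf_le_left.trans (iInf₂_le i hi)
      have hHA_uni : ∀ i ∉ A, HA V A ≤ Huni (V i) := fun i hi =>
        inf_le_right.trans (iInf₂_le i (Finset.mem_compl.mpr hi))
      by_cases h : ∃ i, i ∈ A ∧ i ∉ B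
      · obtain ⟨i, hiA, hiB⟩ := h
        intro u hu
        rw [Submodule.mem_orthogonal]
        intro w hw
        have hw' : w ∈ (Huni (V i))ᗮ := by
          rw [← hiso_eq_orthogonal_huni (hiso i)]
          exact hHA_iso i hiA hw
        rw [← inner_conj_symm, inner_zero_of_orth (unitaryOn_le_huni (huni B i hiB) hu) hw',
          map_zero]
      · push_neg at h
        have h2 : ∃ i, i ∈ B ∧ i ∉ A := by
          by_contra h2
          push_neg at h2
          exact hBA (Finset.Subset.antisymm (fun i hi => h2 i hi) (fun i hi => h i hi))
        obtain ⟨i, hiB, hiA⟩ := h2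
        intro u hu
        rw [Submodule.mem_orthogonal]
        intro w hw
        exact inner_zero_of_orth (hHA_uni i hiA hw)
          (pure_le_orthogonal_huni (hiso i) (hLc B) (hred B i) (hpure B i hiB) hu)
    have htop : (⊤ : Submodule ℂ H) ≤ L A ⊔ (HA V A)ᗮ := by
      rw [← hsup]
      apply iSup_le
      intro B
      by_cases hBA : B = A
      · subst hBA; exact le_sup_left
      · exact (step_b B hBA).trans le_sup_right
    refine le_antisymm (step_a A) ?_
    intro x hx
    have hxsup : x ∈ L A ⊔ (HA V A)ᗮ := htop trivial
    rw [Submodule.mem_sup] at hxsup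
    obtain ⟨u, hu, v, hv, huv⟩ := hxsup
    have hvHA : v ∈ HA V A := by
      have : v = x - u := by rw [← huv]; abel
      rw [this]
      exact Submodule.sub_mem _ hx (step_a A hu)
    have hv0 : v = 0 := inner_self_eq_zero.mp (inner_zero_of_orth hvHA hv)
    rw [← huv, hv0, add_zero]
    exact hu
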